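/- Let C ∈ T_n(R) and 1 ≤ i ≤ j ≤ n, and let C^{[i,j]} be the matrix obtained from C by replacing all entries with row- or column-index outside the interval [i,j] by zeros. Then for every polynomial f ∈ R[x], the (i,j)-entry of f(C) (obtained by evaluating f at the matrix C) equals the (i,j)-entry of f(C^{[i,j]}). -/
import Mathlib

lemma blockTri_pow {n : ℕ} {R : Type*} [CommRing R] {C : Matrix (Fin n) (Fin n) R}
    (hC : C.BlockTriangular id) (k : ℕ) : (C ^ k).BlockTriangular id := by
  induction k with
  | zero => simpa [pow_zero] using Matrix.blockTriangular_one
  | succ k ih => rw [pow_succ]; exact ih.mul hC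

/-- Let `C^{[i,j]}` (called `D`) be obtained from the upper triangular matrix `C`
by replacing all entries with row- or column-index outside `[i,j]` by zeros.
Then for every scalar polynomial `f ∈ R[x]`, the `(i,j)`-entry of `f(C)` equals
the `(i,j)`-entry of `f(C^{[i,j]})`. -/
theorem stmt4 (n : ℕ) (R : Type*) [CommRing R] (C : Matrix (Fin n) (Fin n) R)
    (hC : C.BlockTriangular id) (i j : Fin n) (hij : i ≤ j)
    (D : Matrix (Fin n) (Fin n) R)
    (hD : ∀ a b, D a b = if i ≤ a ∧ a ≤ j ∧ i ≤ b ∧ b ≤ j then C a b else 0)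
    (f : Polynomial R) :
    (Polynomial.aeval C f) i j = (Polynomial.aeval D f) i j := by
  have hDtri : D.BlockTriangular id := by
    intro a b h
    simp only [id] at h
    rw [hD]
    split
    · exact hC h
    · rfl
  have key : ∀ k : ℕ, ∀ a b : Fin n, i ≤ a → a ≤ j → i ≤ b → b ≤ j →
      (C ^ k) a b = (D ^ k) a b := by
    intro k
    induction k with
    | zero => intro a b _ _ _ _; simp
    | succ k ih =>
      intro a b hia haj hib hbj
      rw [pow_succ', pow_succ', Matrix.mul_apply, Matrix.mul_apply]
      refine Finset.sum_congr rfl fun c _ => ?_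
      by_cases hac : a ≤ c
      · by_cases hcb : c ≤ b
        · rw [hD a c, if_pos ⟨hia, haj, hia.trans hac, hcb.trans hbj⟩,
            ih c b (hia.trans hac) (hcb.trans hbj) hib hbj]
        · have h1 : (C ^ k) c b = 0 := blockTri_pow hC k (lt_of_not_ge hcb)
          have h2 : (D ^ k) c b = 0 := blockTri_pow hDtri k (lt_of_not_ge hcb)
          rw [h1, h2, mul_zero, mul_zero]
      · have h1 : C a c = 0 := hC (lt_of_not_ge hac)
        have h2 : D a c = 0 := hDtri (lt_of_not_ge hac)
        rw [h1, h2, zero_mul, zero_mul]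
  rw [Polynomial.aeval_eq_sum_range, Polynomial.aeval_eq_sum_range]
  simp only [Matrix.sum_apply, Matrix.smul_apply]
  exact Finset.sum_congr rfl fun k _ => by rw [key k i j le_rfl hij hij le_rfl]
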